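/- Let p be an odd prime, n ≥ 1, and R a commutative ring in which p·1 = 0. Let F ∈ R⟦X,Y⟧ be a formal group law with F(X,Y) ≡ X + Y modulo (X,Y)^{p^n}, let Aut_F(R) be the group of strict automorphisms of F, let α : Aut_F(R) → G(R) be truncation modulo X^{p^n}, and let β : Q(R) → G(R) be the homomorphism (f₁, f₂) ↦ class of f₂. Then the fiber product C(R) = {(f, q) ∈ Aut_F(R) × Q(R) : α(f) = β(q)} is a subgroup of the product group, the first projection C(R) → Aut_F(R) is a surjective group homomorphism, and its kernel is isomorphic to the additive group R^n. -/

import Mathlib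

open Polynomial

/-- Substitution of a multivariate power series `a` (with zero constant term) for the
variable of a one-variable power series `f`; this is the usual substitution whenever `a`
has zero constant term. -/
noncomputable def substPS {R : Type} [CommRing R] {σ : Type} (a : MvPowerSeries σ R)
    (f : PowerSeries R) : MvPowerSeries σ R :=
  fun d => ∑ m ∈ Finset.range (d.sum (fun _ k => k) + 1),
    PowerSeries.coeff m f * MvPowerSeries.coeff d (a ^ m)

/-- Substitution of two power series `g₀, g₁` (with zero constant terms) for the two
variables of `F ∈ R⟦X,Y⟧`. -/
noncomputable def subst2 {R : Type} [CommRing R] {σ : Type} (g₀ g₁ : MvPowerSeries σ R)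
    (F : MvPowerSeries (Fin 2) R) : MvPowerSeries σ R :=
  fun d => ∑ i ∈ Finset.range (d.sum (fun _ k => k) + 1),
    ∑ j ∈ Finset.range (d.sum (fun _ k => k) + 1),
      MvPowerSeries.coeff (Finsupp.single (0 : Fin 2) i + Finsupp.single (1 : Fin 2) j) F *
        MvPowerSeries.coeff d (g₀ ^ i * g₁ ^ j)

namespace S15
open Finset

variable {R : Type} [CommRing R]

def deg {σ : Type} (d : σ →₀ ℕ) : ℕ := d.sum (fun _ k => k)

lemma deg_add {σ : Type} (d e : σ →₀ ℕ) : deg (d + e) = deg d + deg e := by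
  simp [deg, Finsupp.sum_add_index']

lemma deg_single {σ : Type} (s : σ) (k : ℕ) : deg (Finsupp.single s k) = k := by
  simp [deg, Finsupp.sum_single_index]

lemma deg_eq_zero {σ : Type} {d : σ →₀ ℕ} (h : deg d = 0) : d = 0 := by
  classical
  ext s
  by_contra hs
  have hmem : s ∈ d.support := Finsupp.mem_support_iff.mpr (by simpa using hs)
  have := Finset.sum_eq_zero_iff.mp h s hmem
  simp at this
  exact hs (by simpa using this)

lemma coeff_mul_vanish {σ : Type} [DecidableEq σ] {u v : MvPowerSeries σ R} {a b : ℕ}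
    (hu : ∀ d, deg d < a → MvPowerSeries.coeff d u = 0)
    (hv : ∀ d, deg d < b → MvPowerSeries.coeff d v = 0) :
    ∀ d, deg d < a + b → MvPowerSeries.coeff d (u * v) = 0 := by
  intro d hd
  rw [MvPowerSeries.coeff_mul]
  refine Finset.sum_eq_zero fun x hx => ?_
  have hxd : x.1 + x.2 = d := Finset.HasAntidiagonal.mem_antidiagonal.mp hx
  have hdeg : deg x.1 + deg x.2 = deg d := by rw [← deg_add, hxd]
  by_cases h1 : deg x.1 < a
  · rw [hu x.1 h1, zero_mul]
  · have : deg x.2 < b := by omega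
    rw [hv x.2 this, mul_zero]

lemma coeff_pow_vanish {σ : Type} [DecidableEq σ] {u : MvPowerSeries σ R}
    (h0 : MvPowerSeries.coeff 0 u = 0) :
    ∀ m d, deg d < m → MvPowerSeries.coeff d (u ^ m) = 0 := by
  have h1 : ∀ d, deg d < 1 → MvPowerSeries.coeff d u = 0 := by
    intro d hd
    have : d = 0 := deg_eq_zero (by omega)
    rwa [this]
  intro m
  induction m with
  | zero => intro d hd; omega
  | succ m ih =>
      intro d hd
      rw [pow_succ]
      exact coeff_mul_vanish ih h1 d hd

lemma span_pow_vanish {N : ℕ} {x : MvPowerSeries (Fin 2) R}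
    (hx : x ∈ (Ideal.span {(MvPowerSeries.X 0 : MvPowerSeries (Fin 2) R),
      MvPowerSeries.X 1}) ^ N) :
    ∀ d, deg d < N → MvPowerSeries.coeff d x = 0 := by
  classical
  induction N generalizing x with
  | zero => intro d hd; omega
  | succ N ih =>
      rw [pow_succ] at hx
      induction hx using Submodule.mul_induction_on' with
      | mem_mul_mem m hm y hy =>
          have hy0 : ∀ d, deg d < 1 → MvPowerSeries.coeff d y = 0 := by
            intro d hd
            have hd0 : d = 0 := deg_eq_zero (by omega)
            obtain ⟨c0, c1, hc⟩ := Ideal.mem_span_pair.mp hy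
            subst hd0
            rw [← hc]
            simp only [MvPowerSeries.coeff_zero_eq_constantCoeff, map_add, map_mul,
              MvPowerSeries.constantCoeff_X, mul_zero, add_zero]
          exact coeff_mul_vanish (ih hm) hy0
      | add x y hx hy ihx ihy =>
          intro d hd
          rw [map_add, ihx d hd, ihy d hd, add_zero]

lemma coeff_substPS {σ : Type} (a : MvPowerSeries σ R) (f : PowerSeries R) (d : σ →₀ ℕ) :
    MvPowerSeries.coeff d (substPS a f) =
      ∑ m ∈ Finset.range (deg d + 1),
        PowerSeries.coeff m f * MvPowerSeries.coeff d (a ^ m) :=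
  rfl

lemma ps_coeff_eq (k : ℕ) (x : PowerSeries R) :
    PowerSeries.coeff k x = MvPowerSeries.coeff (Finsupp.single () k) x := rfl

lemma coeff_substPS' (a f : PowerSeries R) (k : ℕ) :
    PowerSeries.coeff k (substPS a f) =
      ∑ m ∈ Finset.range (k + 1),
        PowerSeries.coeff m f * PowerSeries.coeff k (a ^ m) := by
  rw [ps_coeff_eq, coeff_substPS, deg_single]
  rfl

lemma pow_coeff_congr {N : ℕ} {a a' : PowerSeries R}
    (h : ∀ m < N, PowerSeries.coeff m a = PowerSeries.coeff m a')
    (m : ℕ) {k : ℕ} (hk : k < N) :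
    PowerSeries.coeff k (a ^ m) = PowerSeries.coeff k (a' ^ m) := by
  have hdvd : (PowerSeries.X : PowerSeries R) ^ N ∣ a - a' := by
    rw [PowerSeries.X_pow_dvd_iff]
    intro j hj
    rw [map_sub, h j hj, sub_self]
  have : (PowerSeries.X : PowerSeries R) ^ N ∣ a ^ m - a' ^ m :=
    dvd_trans hdvd (sub_dvd_pow_sub_pow a a' m)
  have h0 := (PowerSeries.X_pow_dvd_iff.mp this) k hk
  rw [map_sub, sub_eq_zero] at h0
  exact h0

lemma coeff_substPS_congr {N : ℕ} {a a' f f' : PowerSeries R}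
    (ha : ∀ m < N, PowerSeries.coeff m a = PowerSeries.coeff m a')
    (hf : ∀ m < N, PowerSeries.coeff m f = PowerSeries.coeff m f')
    {k : ℕ} (hk : k < N) :
    PowerSeries.coeff k (substPS a f) = PowerSeries.coeff k (substPS a' f') := by
  rw [coeff_substPS', coeff_substPS']
  refine Finset.sum_congr rfl fun m hm => ?_
  have hmN : m < N := lt_of_lt_of_le (Finset.mem_range.mp hm) (by omega)
  rw [hf m hmN, pow_coeff_congr ha m hk]

lemma comp_coeff (u v : R[X]) (hu : u.coeff 0 = 0) (k : ℕ) :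
    (v.comp u).coeff k = ∑ m ∈ Finset.range (k + 1), v.coeff m * (u ^ m).coeff k := by
  have hXd : (X : R[X]) ∣ u := Polynomial.X_dvd_iff.mpr hu
  have hvanish : ∀ m, k < m → (u ^ m).coeff k = 0 := by
    intro m hm
    have : (X : R[X]) ^ m ∣ u ^ m := pow_dvd_pow_of_dvd hXd m
    exact Polynomial.X_pow_dvd_iff.mp this k hm
  rw [Polynomial.comp, Polynomial.eval₂_eq_sum_range]
  rw [Polynomial.finset_sum_coeff]
  simp only [Polynomial.coeff_C_mul]
  rcases le_or_gt (v.natDegree + 1) (k + 1) with hle | hlt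
  · rw [← Finset.sum_subset (Finset.range_subset_range.mpr hle)]
    intro m _ hm2
    rw [Finset.mem_range, not_lt] at hm2
    rw [Polynomial.coeff_eq_zero_of_natDegree_lt (by omega), zero_mul]
  · rw [Finset.sum_subset (Finset.range_subset_range.mpr (le_of_lt hlt))]
    intro m _ hm2
    rw [Finset.mem_range, not_lt] at hm2
    rw [hvanish m (by omega), mul_zero]

lemma coeff_substPS_poly (u v : R[X]) (hu : u.coeff 0 = 0) (k : ℕ) :
    PowerSeries.coeff k (substPS (u : PowerSeries R) (v : PowerSeries R)) =
      (v.comp u).coeff k := by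
  rw [coeff_substPS', comp_coeff u v hu]
  refine Finset.sum_congr rfl fun m _ => ?_
  rw [Polynomial.coeff_coe, ← Polynomial.coe_pow, Polynomial.coeff_coe]

lemma pow_coeff_congr_poly {N : ℕ} {u u' : R[X]}
    (h : ∀ m < N, u.coeff m = u'.coeff m) (m : ℕ) {k : ℕ} (hk : k < N) :
    (u ^ m).coeff k = (u' ^ m).coeff k := by
  have hdvd : (X : R[X]) ^ N ∣ u - u' := by
    rw [Polynomial.X_pow_dvd_iff]
    intro j hj
    rw [Polynomial.coeff_sub, h j hj, sub_self]
  have : (X : R[X]) ^ N ∣ u ^ m - u' ^ m :=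
    dvd_trans hdvd (sub_dvd_pow_sub_pow u u' m)
  have h0 := (Polynomial.X_pow_dvd_iff.mp this) k hk
  rw [Polynomial.coeff_sub, sub_eq_zero] at h0
  exact h0

lemma comp_congr {N : ℕ} {u u' v v' : R[X]} (hu : u.coeff 0 = 0) (hu' : u'.coeff 0 = 0)
    (h1 : ∀ m < N, u.coeff m = u'.coeff m) (h2 : ∀ m < N, v.coeff m = v'.coeff m)
    {k : ℕ} (hk : k < N) : (v.comp u).coeff k = (v'.comp u').coeff k := by
  rw [comp_coeff u v hu, comp_coeff u' v' hu']
  refine Finset.sum_congr rfl fun m hm => ?_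
  have hmN : m < N := lt_of_lt_of_le (Finset.mem_range.mp hm) (by omega)
  rw [h2 m hmN, pow_coeff_congr_poly h1 m hk]


section CharP

variable {S : Type*} [CommRing S] {p : ℕ}

lemma add_pow_ppow (hp : p.Prime) (hpS : (p : S) = 0) (x y : S) (i : ℕ) :
    (x + y) ^ p ^ i = x ^ p ^ i + y ^ p ^ i := by
  rw [add_pow_prime_pow_eq hp x y i, hpS]
  simp only [zero_mul, add_zero]

lemma sum_pow_ppow (hp : p.Prime) (hpS : (p : S) = 0) {ι : Type*} (s : Finset ι)
    (g : ι → S) (i : ℕ) : (∑ j ∈ s, g j) ^ p ^ i = ∑ j ∈ s, g j ^ p ^ i := by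
  classical
  induction s using Finset.induction with
  | empty => simp [zero_pow (pow_ne_zero i hp.ne_zero)]
  | insert _ _ hx ih =>
      rw [Finset.sum_insert hx, Finset.sum_insert hx, add_pow_ppow hp hpS, ih]

end CharP

noncomputable def fp (p n : ℕ) (b : ℕ → R) : R[X] :=
  X + ∑ k ∈ Finset.Ico 1 n, C (b k) * X ^ p ^ k

noncomputable def ga (p n : ℕ) (a : ℕ → R) : R[X] :=
  ∑ i ∈ Finset.range n, C (a i) * X ^ p ^ i

def PP (p : ℕ) (w : R[X]) : Prop := ∀ k, (∀ j, k ≠ p ^ j) → w.coeff k = 0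

variable {p n : ℕ}

lemma ppow_ne_one (hp : 1 < p) {j : ℕ} (hj : 1 ≤ j) : p ^ j ≠ 1 := by
  have := Nat.one_lt_pow (by omega : j ≠ 0) hp
  omega

lemma PP_fp (b : ℕ → R) : PP p (fp p n b) := by
  intro k hk
  rw [fp, Polynomial.coeff_add, Polynomial.coeff_X, Polynomial.finset_sum_coeff]
  have h1 : k ≠ 1 := by simpa using hk 0
  rw [if_neg (fun h => h1 h.symm), zero_add]
  refine Finset.sum_eq_zero fun j hj => ?_
  rw [Polynomial.coeff_C_mul, Polynomial.coeff_X_pow, if_neg (hk j), mul_zero]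

lemma fp_coeff_one (hp : 1 < p) (b : ℕ → R) : (fp p n b).coeff 1 = 1 := by
  rw [fp, Polynomial.coeff_add, Polynomial.coeff_X, if_pos rfl, Polynomial.finset_sum_coeff]
  have : ∀ j ∈ Finset.Ico 1 n, (C (b j) * X ^ p ^ j).coeff 1 = 0 := by
    intro j hj
    obtain ⟨hj1, _⟩ := Finset.mem_Ico.mp hj
    rw [Polynomial.coeff_C_mul, Polynomial.coeff_X_pow,
      if_neg (fun h => ppow_ne_one hp hj1 h.symm), mul_zero]
  rw [Finset.sum_eq_zero this, add_zero]

lemma fp_coeff_ppow (hp : 1 < p) (b : ℕ → R) {j : ℕ} (hj1 : 1 ≤ j) (hjn : j < n) :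
    (fp p n b).coeff (p ^ j) = b j := by
  rw [fp, Polynomial.coeff_add, Polynomial.coeff_X,
    if_neg (fun h => ppow_ne_one hp hj1 h.symm), zero_add, Polynomial.finset_sum_coeff]
  rw [Finset.sum_eq_single j]
  · rw [Polynomial.coeff_C_mul, Polynomial.coeff_X_pow, if_pos rfl, mul_one]
  · intro j' _ hj'
    rw [Polynomial.coeff_C_mul, Polynomial.coeff_X_pow,
      if_neg (fun h => hj' (Nat.pow_right_injective hp h).symm), mul_zero]
  · intro h
    exact absurd (Finset.mem_Ico.mpr ⟨hj1, hjn⟩) h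

lemma PP_ga (a : ℕ → R) : PP p (ga p n a) := by
  intro k hk
  rw [ga, Polynomial.finset_sum_coeff]
  refine Finset.sum_eq_zero fun j _ => ?_
  rw [Polynomial.coeff_C_mul, Polynomial.coeff_X_pow, if_neg (hk j), mul_zero]

lemma ga_coeff_ppow (hp : 1 < p) (a : ℕ → R) {i : ℕ} (hi : i < n) :
    (ga p n a).coeff (p ^ i) = a i := by
  rw [ga, Polynomial.finset_sum_coeff, Finset.sum_eq_single i]
  · rw [Polynomial.coeff_C_mul, Polynomial.coeff_X_pow, if_pos rfl, mul_one]
  · intro j' _ hj'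
    rw [Polynomial.coeff_C_mul, Polynomial.coeff_X_pow,
      if_neg (fun h => hj' (Nat.pow_right_injective hp h).symm), mul_zero]
  · intro h
    exact absurd (Finset.mem_range.mpr hi) h

lemma canon_fp (hp : p.Prime) {w : R[X]} (hw : PP p w) (h1 : w.coeff 1 = 1)
    {k : ℕ} (hk : k < p ^ n) :
    w.coeff k = (fp p n (fun j => w.coeff (p ^ j))).coeff k := by
  by_cases hpp : ∀ j, k ≠ p ^ j
  · rw [hw k hpp, PP_fp _ k hpp]
  · push_neg at hpp
    obtain ⟨j, rfl⟩ := hpp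
    rcases Nat.eq_zero_or_pos j with rfl | hj1
    · rw [pow_zero, h1, fp_coeff_one hp.one_lt]
    · have hjn : j < n := by
        by_contra hge
        have : p ^ n ≤ p ^ j := Nat.pow_le_pow_right hp.pos (by omega)
        omega
      rw [fp_coeff_ppow hp.one_lt _ hj1 hjn]

lemma canon_ga (hp : p.Prime) {v : R[X]} (hv : PP p v) {k : ℕ} (hk : k < p ^ n) :
    v.coeff k = (ga p n (fun j => v.coeff (p ^ j))).coeff k := by
  by_cases hpp : ∀ j, k ≠ p ^ j
  · rw [hv k hpp, PP_ga _ k hpp]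
  · push_neg at hpp
    obtain ⟨j, rfl⟩ := hpp
    have hjn : j < n := by
      by_contra hge
      have : p ^ n ≤ p ^ j := Nat.pow_le_pow_right hp.pos (by omega)
      omega
    rw [ga_coeff_ppow hp.one_lt _ hjn]

lemma fp_pow (hp : p.Prime) (hpR : (p : R) = 0) (b : ℕ → R) (i : ℕ) :
    (fp p n b) ^ p ^ i =
      X ^ p ^ i + ∑ k ∈ Finset.Ico 1 n, C (b k ^ p ^ i) * X ^ p ^ (k + i) := by
  have hpX : ((p : ℕ) : R[X]) = 0 := by
    rw [← Polynomial.C_eq_natCast, hpR, map_zero]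
  rw [fp, add_pow_ppow hp hpX, sum_pow_ppow hp hpX]
  congr 1
  refine Finset.sum_congr rfl fun k _ => ?_
  rw [mul_pow, ← map_pow, ← pow_mul, pow_add]

lemma PP_fp_pow (hp : p.Prime) (hpR : (p : R) = 0) (b : ℕ → R) (i : ℕ) :
    PP p ((fp p n b) ^ p ^ i) := by
  intro k hk
  rw [fp_pow hp hpR, Polynomial.coeff_add, Polynomial.coeff_X_pow, if_neg (hk i), zero_add,
    Polynomial.finset_sum_coeff]
  refine Finset.sum_eq_zero fun j _ => ?_
  rw [Polynomial.coeff_C_mul, Polynomial.coeff_X_pow, if_neg (hk (j + i)), mul_zero]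


noncomputable def psi : R[X] →+* MvPolynomial (Fin 2) R :=
  Polynomial.eval₂RingHom (MvPolynomial.C : R →+* MvPolynomial (Fin 2) R)
    (MvPolynomial.X 1)

noncomputable def phi : MvPolynomial (Fin 2) R →+* R[X] :=
  MvPolynomial.eval₂Hom (Polynomial.C : R →+* R[X])
    (fun i => if i = 0 then 0 else Polynomial.X)

@[simp] lemma psi_C (r : R) : (psi (C r) : MvPolynomial (Fin 2) R) = MvPolynomial.C r := by
  simp [psi]

@[simp] lemma psi_X : (psi (X : R[X]) : MvPolynomial (Fin 2) R) = MvPolynomial.X 1 := by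
  simp [psi]

@[simp] lemma phi_C (r : R) : phi (MvPolynomial.C r) = (C r : R[X]) := by
  simp [phi]

@[simp] lemma phi_X0 : phi (MvPolynomial.X 0 : MvPolynomial (Fin 2) R) = 0 := by
  simp [phi]

@[simp] lemma phi_X1 : phi (MvPolynomial.X 1 : MvPolynomial (Fin 2) R) = (X : R[X]) := by
  simp [phi]

lemma phi_psi (u : R[X]) : phi (psi u) = u := by
  have : (phi.comp psi : R[X] →+* R[X]) = RingHom.id R[X] := by
    apply Polynomial.ringHom_ext
    · intro a; simp
    · simp
  calc phi (psi u) = (phi.comp psi) u := rfl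
    _ = u := by rw [this]; rfl

lemma coeff_eq_of_mem_span {N : ℕ} {s t : R[X]}
    (h : psi s - psi t ∈ Ideal.span {(MvPolynomial.X 0 : MvPolynomial (Fin 2) R) ^ 2,
      MvPolynomial.X 1 ^ N}) :
    ∀ k < N, s.coeff k = t.coeff k := by
  obtain ⟨u, v, huv⟩ := Ideal.mem_span_pair.mp h
  have : s - t = phi v * X ^ N := by
    have := congrArg phi huv
    simp only [map_add, map_mul, map_pow, phi_X0, phi_X1, map_sub, phi_psi] at this
    rw [← this]
    ring
  intro k hk
  have hd : (X : R[X]) ^ N ∣ s - t := ⟨phi v, by rw [this]; ring⟩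
  have := Polynomial.X_pow_dvd_iff.mp hd k hk
  rw [Polynomial.coeff_sub, sub_eq_zero] at this
  exact this

lemma mem_span_of_coeff {N : ℕ} {s t : R[X]} (h : ∀ k < N, s.coeff k = t.coeff k) :
    psi s - psi t ∈ Ideal.span {(MvPolynomial.X 0 : MvPolynomial (Fin 2) R) ^ 2,
      MvPolynomial.X 1 ^ N} := by
  have hd : (X : R[X]) ^ N ∣ s - t := by
    rw [Polynomial.X_pow_dvd_iff]
    intro k hk
    rw [Polynomial.coeff_sub, h k hk, sub_self]
  obtain ⟨c, hc⟩ := hd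
  refine Ideal.mem_span_pair.mpr ⟨0, psi c, ?_⟩
  have : psi s - psi t = psi (s - t) := by rw [map_sub]
  rw [this, hc, map_mul, map_pow, psi_X]
  ring

lemma mkJ_iff {N : ℕ} {u v : R[X]} :
    Ideal.Quotient.mk (Ideal.span {(X : R[X]) ^ N}) u =
      Ideal.Quotient.mk (Ideal.span {(X : R[X]) ^ N}) v ↔
    ∀ k < N, u.coeff k = v.coeff k := by
  rw [Ideal.Quotient.eq, Ideal.mem_span_singleton]
  rw [Polynomial.X_pow_dvd_iff]
  constructor
  · intro h k hk
    have := h k hk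
    rw [Polynomial.coeff_sub, sub_eq_zero] at this
    exact this
  · intro h k hk
    rw [Polynomial.coeff_sub, h k hk, sub_self]

lemma exists_choose_not_dvd {p : ℕ} (hp : p.Prime) :
    ∀ m, 2 ≤ m → (∀ j, m ≠ p ^ j) → ∃ j0, 0 < j0 ∧ j0 < m ∧ ¬ p ∣ m.choose j0 := by
  haveI : Fact p.Prime := ⟨hp⟩
  have hp1 : 1 < p := hp.one_lt
  intro m
  induction m using Nat.strong_induction_on with
  | _ m ih =>
  intro hm2 hnp
  have hdm := Nat.div_add_mod m p
  rcases lt_or_ge m p with hmp | hpm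
  · refine ⟨1, by omega, by omega, fun hdvd => ?_⟩
    rw [Nat.choose_one_right] at hdvd
    have := Nat.le_of_dvd (by omega) hdvd
    omega
  · have hq1 : 1 ≤ m / p := (Nat.one_le_div_iff hp.pos).mpr hpm
    by_cases hr : m % p = 0
    · have hq2 : 2 ≤ m / p := by
        rcases Nat.lt_or_ge (m / p) 2 with h | h
        · exfalso
          have h1' : m / p = 1 := by omega
          rw [h1', hr, mul_one, add_zero] at hdm
          exact hnp 1 (by rw [pow_one, hdm])
        · exact h
      have hqnp : ∀ j, m / p ≠ p ^ j := by
        intro j hj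
        apply hnp (j + 1)
        have hm' : m = p * (m / p) := by omega
        rw [hm', hj, ← pow_succ']
      obtain ⟨j0', h1, h2, h3⟩ := ih (m / p) (Nat.div_lt_self (by omega) hp1) hq2 hqnp
      have hj0m : p * j0' < m := by
        have h4 : p * j0' < p * (m / p) := (Nat.mul_lt_mul_left hp.pos).mpr h2
        omega
      refine ⟨p * j0', Nat.mul_pos hp.pos h1, hj0m, fun hdvd => ?_⟩
      have lucas := Choose.choose_modEq_choose_mod_mul_choose_div_nat
        (p := p) (n := m) (k := p * j0')
      rw [Nat.mul_mod_right, hr, Nat.mul_div_cancel_left j0' hp.pos, Nat.choose_self,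
        one_mul] at lucas
      unfold Nat.ModEq at lucas
      exact h3 (Nat.dvd_of_mod_eq_zero (by
        have hz : m.choose (p * j0') % p = 0 := Nat.mod_eq_zero_of_dvd hdvd
        omega))
    · refine ⟨p * (m / p), Nat.mul_pos hp.pos hq1, by omega, fun hdvd => ?_⟩
      have lucas := Choose.choose_modEq_choose_mod_mul_choose_div_nat
        (p := p) (n := m) (k := p * (m / p))
      rw [Nat.mul_mod_right, Nat.mul_div_cancel_left _ hp.pos, Nat.choose_zero_right,
        Nat.choose_self, one_mul] at lucas
      unfold Nat.ModEq at lucas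
      have hz : m.choose (p * (m / p)) % p = 0 := Nat.mod_eq_zero_of_dvd hdvd
      have h1 : 1 % p = 1 := Nat.mod_eq_of_lt hp1
      omega

lemma eq_zero_of_mul_choose {p c : ℕ} (hp : p.Prime) (h : ¬ p ∣ c) (hpR : (p : R) = 0)
    {r : R} (hr : r * (c : R) = 0) : r = 0 := by
  have hco : Nat.gcd p c = 1 := (Nat.Prime.coprime_iff_not_dvd hp).mpr h
  have hbez := Nat.gcd_eq_gcd_ab p c
  rw [hco] at hbez
  have : (1 : R) = (c : R) * ((Nat.gcdB p c : ℤ) : R) := by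
    have := congrArg (fun z : ℤ => ((z : ℤ) : R)) hbez
    push_cast at this
    rw [hpR] at this
    simpa using this
  calc r = r * 1 := by ring
    _ = r * (c : R) * ((Nat.gcdB p c : ℤ) : R) := by rw [this]; ring
    _ = 0 := by rw [hr, zero_mul]


lemma deg_zero {σ : Type} : deg (0 : σ →₀ ℕ) = 0 := by simp [deg]

lemma coeff_subst2 {σ : Type} (g₀ g₁ : MvPowerSeries σ R) (F : MvPowerSeries (Fin 2) R)
    (d : σ →₀ ℕ) :
    MvPowerSeries.coeff d (subst2 g₀ g₁ F) =
      ∑ i ∈ Finset.range (deg d + 1), ∑ j ∈ Finset.range (deg d + 1),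
        MvPowerSeries.coeff (Finsupp.single (0 : Fin 2) i + Finsupp.single (1 : Fin 2) j) F *
          MvPowerSeries.coeff d (g₀ ^ i * g₁ ^ j) := rfl

lemma PP_add {u v : R[X]} (hu : PP p u) (hv : PP p v) : PP p (u + v) := fun k hk => by
  rw [Polynomial.coeff_add, hu k hk, hv k hk, add_zero]

lemma PP_sum {ι : Type} {s : Finset ι} {g : ι → R[X]} (h : ∀ i ∈ s, PP p (g i)) :
    PP p (∑ i ∈ s, g i) := fun k hk => by
  rw [Polynomial.finset_sum_coeff]
  exact Finset.sum_eq_zero fun i hi => h i hi k hk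

lemma PP_Cmul {u : R[X]} (r : R) (hu : PP p u) : PP p (C r * u) := fun k hk => by
  rw [Polynomial.coeff_C_mul, hu k hk, mul_zero]

lemma fp_coeff_zero (hp : 0 < p) (b : ℕ → R) : (fp p n b).coeff 0 = 0 := by
  rw [fp, Polynomial.coeff_add, Polynomial.coeff_X, if_neg (by omega : ¬ (1:ℕ) = 0),
    zero_add, Polynomial.finset_sum_coeff]
  refine Finset.sum_eq_zero fun k _ => ?_
  rw [Polynomial.coeff_C_mul, Polynomial.coeff_X_pow,
    if_neg (fun h => (Nat.pow_pos (n := k) hp).ne h), mul_zero]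

lemma fp_comp (b d : ℕ → R) :
    (fp p n d).comp (fp p n b) =
      fp p n b + ∑ i ∈ Finset.Ico 1 n, C (d i) * (fp p n b) ^ p ^ i := by
  conv_lhs => rw [fp]
  rw [Polynomial.add_comp, Polynomial.X_comp, Polynomial.sum_comp]
  congr 1
  refine Finset.sum_congr rfl fun i _ => ?_
  rw [Polynomial.mul_comp, Polynomial.C_comp, Polynomial.pow_comp, Polynomial.X_comp]

lemma fp_pow_coeff_one (hp : p.Prime) (hpR : (p : R) = 0) (b : ℕ → R) {i : ℕ}
    (hi : 1 ≤ i) : ((fp p n b) ^ p ^ i).coeff 1 = 0 := by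
  rw [fp_pow hp hpR, Polynomial.coeff_add, Polynomial.coeff_X_pow,
    if_neg (fun h => ppow_ne_one hp.one_lt hi h.symm), zero_add,
    Polynomial.finset_sum_coeff]
  refine Finset.sum_eq_zero fun k hk => ?_
  obtain ⟨hk1, _⟩ := Finset.mem_Ico.mp hk
  rw [Polynomial.coeff_C_mul, Polynomial.coeff_X_pow,
    if_neg (fun h => ppow_ne_one hp.one_lt (by omega) h.symm), mul_zero]

lemma dsum_ite {M : ℕ} (T : ℕ → ℕ → R) {i0 j0 : ℕ} (hi : i0 < M) (hj : j0 < M)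
    (cond : ℕ → ℕ → Prop) [∀ i j, Decidable (cond i j)]
    (hcond : ∀ i j, cond i j ↔ i = i0 ∧ j = j0) :
    ∑ i ∈ Finset.range M, ∑ j ∈ Finset.range M, (if cond i j then (1 : R) else 0) * T i j
      = T i0 j0 := by
  rw [Finset.sum_eq_single i0]
  · rw [Finset.sum_eq_single j0]
    · rw [if_pos ((hcond i0 j0).mpr ⟨rfl, rfl⟩), one_mul]
    · intro j _ hjne
      rw [if_neg (fun h => hjne ((hcond i0 j).mp h).2), zero_mul]
    · intro h; exact absurd (Finset.mem_range.mpr hj) h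
  · intro i _ hine
    refine Finset.sum_eq_zero fun j _ => ?_
    rw [if_neg (fun h => hine ((hcond i j).mp h).1), zero_mul]
  · intro h; exact absurd (Finset.mem_range.mpr hi) h

end S15

/-- Let `p` be an odd prime, `n ≥ 1`, `R` a commutative ring with `p·1 = 0`,
`F ∈ R⟦X,Y⟧` a formal group law with `F(X,Y) ≡ X + Y mod (X,Y)^(p^n)`, `Aut_F(R)` the group
of strict automorphisms of `F` (product `f·g = g∘f`), `α : Aut_F(R) → G(R)` truncation
modulo `X^(p^n)`, and `β : Q(R) → G(R)` the homomorphism `(f₁,f₂) ↦ class of f₂`.  Then the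
fiber product `C(R) = {(f,q) : α(f) = β(q)}` is a subgroup of the product group, the first
projection `C(R) → Aut_F(R)` is a surjective group homomorphism, and its kernel is
isomorphic to the additive group `R^n`. -/
theorem stmt_15 (p n : ℕ) (hp : p.Prime) (hodd : Odd p) (hn : 1 ≤ n)
    (R : Type) [CommRing R] (hpR : (p : R) = 0)
    -- the formal group law F
    (F : MvPowerSeries (Fin 2) R)
    (hF0 : MvPowerSeries.constantCoeff F = 0)
    (hFX : subst2 (MvPowerSeries.X 0) 0 F = (MvPowerSeries.X 0 : MvPowerSeries (Fin 2) R))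
    (hFY : subst2 0 (MvPowerSeries.X 1) F = (MvPowerSeries.X 1 : MvPowerSeries (Fin 2) R))
    (hFcomm : subst2 (MvPowerSeries.X 1) (MvPowerSeries.X 0) F = F)
    (hFassoc :
      subst2 (subst2 (MvPowerSeries.X 0) (MvPowerSeries.X 1) F)
          (MvPowerSeries.X 2 : MvPowerSeries (Fin 3) R) F =
        subst2 (MvPowerSeries.X 0 : MvPowerSeries (Fin 3) R)
          (subst2 (MvPowerSeries.X 1) (MvPowerSeries.X 2) F) F)
    (hFadd : F - (MvPowerSeries.X 0 + MvPowerSeries.X 1) ∈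
      (Ideal.span {(MvPowerSeries.X 0 : MvPowerSeries (Fin 2) R),
        MvPowerSeries.X 1}) ^ (p ^ n))
    -- Aut_F(R): the group of strict automorphisms of F, with product f·g = g∘f
    (A : Set (PowerSeries R))
    (hA : A = {f | f - PowerSeries.X ∈ Ideal.span {(PowerSeries.X : PowerSeries R) ^ 2} ∧
      substPS F f =
        subst2 (substPS (MvPowerSeries.X 0 : MvPowerSeries (Fin 2) R) f)
          (substPS (MvPowerSeries.X 1 : MvPowerSeries (Fin 2) R) f) F})
    (mulA : A → A → A)
    (hmulA : ∀ f g : A, (mulA f g).1 = substPS f.1 g.1)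
    (oneA : A) (hOneA : oneA.1 = PowerSeries.X)
    (invA : A → A)
    (hinvA : ∀ f, mulA (invA f) f = oneA ∧ mulA f (invA f) = oneA)
    -- Q(R)
    (I : Ideal (MvPolynomial (Fin 2) R))
    (hI : I = Ideal.span {MvPolynomial.X 0 ^ 2, MvPolynomial.X 1 ^ (p ^ n)})
    (F1 F2 : (ℕ → R) → MvPolynomial (Fin 2) R)
    (hF1 : ∀ a, F1 a = MvPolynomial.X 0 +
      ∑ i ∈ Finset.range n, MvPolynomial.C (a i) * MvPolynomial.X 1 ^ (p ^ i))
    (hF2 : ∀ b, F2 b = MvPolynomial.X 1 +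
      ∑ i ∈ Finset.Ico 1 n, MvPolynomial.C (b i) * MvPolynomial.X 1 ^ (p ^ i))
    (Q : Set ((MvPolynomial (Fin 2) R ⧸ I) × (MvPolynomial (Fin 2) R ⧸ I)))
    (hQ : Q = {q | ∃ a b : ℕ → R,
      q = (Ideal.Quotient.mk I (F1 a), Ideal.Quotient.mk I (F2 b))})
    (mulQ : Q → Q → Q)
    (hmulQ : ∀ (a b c d : ℕ → R) (x y : Q),
      x.1 = (Ideal.Quotient.mk I (F1 a), Ideal.Quotient.mk I (F2 b)) →
      y.1 = (Ideal.Quotient.mk I (F1 c), Ideal.Quotient.mk I (F2 d)) →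
      (mulQ x y).1 =
        (Ideal.Quotient.mk I (F1 a + ∑ i ∈ Finset.range n,
            MvPolynomial.C (c i) * (F2 b) ^ (p ^ i)),
         Ideal.Quotient.mk I (F2 b + ∑ i ∈ Finset.Ico 1 n,
            MvPolynomial.C (d i) * (F2 b) ^ (p ^ i))))
    (oneQ : Q)
    (hOneQ : oneQ.1 =
      (Ideal.Quotient.mk I (MvPolynomial.X 0), Ideal.Quotient.mk I (MvPolynomial.X 1)))
    (invQ : Q → Q)
    (hinvQ : ∀ x, mulQ (invQ x) x = oneQ ∧ mulQ x (invQ x) = oneQ)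
    -- G(R)
    (J : Ideal (Polynomial R))
    (hJ : J = Ideal.span {(X : Polynomial R) ^ (p ^ n)})
    (f2p : (ℕ → R) → Polynomial R)
    (hf2p : ∀ b, f2p b = X + ∑ k ∈ Finset.Ico 1 n, C (b k) * X ^ (p ^ k))
    (G : Set (Polynomial R ⧸ J))
    (hG : G = {q | ∃ b : ℕ → R, q = Ideal.Quotient.mk J (f2p b)})
    -- α : Aut_F(R) → G(R) is truncation modulo X^(p^n)
    (α : A → G)
    (hα : ∀ f : A, (α f).1 = Ideal.Quotient.mk J (PowerSeries.trunc (p ^ n) f.1))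
    -- β : Q(R) → G(R) sends (f₁, f₂) to the class of f₂
    (β : Q → G)
    (hβ : ∀ (a b : ℕ → R) (x : Q),
      x.1 = (Ideal.Quotient.mk I (F1 a), Ideal.Quotient.mk I (F2 b)) →
      (β x).1 = Ideal.Quotient.mk J (f2p b))
    -- the fiber product C(R)
    (Cset : Set (A × Q))
    (hC : Cset = {x | α x.1 = β x.2}) :
    -- C(R) is a subgroup of the product group
    ((oneA, oneQ) ∈ Cset ∧
      (∀ x ∈ Cset, ∀ y ∈ Cset, (mulA x.1 y.1, mulQ x.2 y.2) ∈ Cset) ∧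
      (∀ x ∈ Cset, (invA x.1, invQ x.2) ∈ Cset)) ∧
    -- the first projection C(R) → Aut_F(R) is a surjective group homomorphism
    ((∀ f : A, ∃ c ∈ Cset, c.1 = f) ∧
      (∀ c c' d : {x : A × Q // x ∈ Cset},
        d.1 = (mulA c.1.1 c'.1.1, mulQ c.1.2 c'.1.2) →
        d.1.1 = mulA c.1.1 c'.1.1)) ∧
    -- the kernel of the first projection is isomorphic to the additive group R^n
    (∃ e : {c : {x : A × Q // x ∈ Cset} // c.1.1 = oneA} → (Fin n → R),
      Function.Bijective e ∧
      (∀ c c' d : {c : {x : A × Q // x ∈ Cset} // c.1.1 = oneA},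
        d.1.1 = (mulA c.1.1.1 c'.1.1.1, mulQ c.1.1.2 c'.1.1.2) →
        e d = e c + e c')) := by
  classical
  have hp1 : 1 < p := hp.one_lt
  have hpn1 : 1 < p ^ n := Nat.one_lt_pow (by omega) hp1
  have hAmem : ∀ g : PowerSeries R, g ∈ A ↔
      (g - PowerSeries.X ∈ Ideal.span {(PowerSeries.X : PowerSeries R) ^ 2} ∧
        substPS F g =
          subst2 (substPS (MvPowerSeries.X 0 : MvPowerSeries (Fin 2) R) g)
            (substPS (MvPowerSeries.X 1 : MvPowerSeries (Fin 2) R) g) F) := by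
    intro g
    rw [hA]
    rfl
  have hQmem : ∀ z, z ∈ Q ↔ ∃ a b : ℕ → R,
      z = (Ideal.Quotient.mk I (F1 a), Ideal.Quotient.mk I (F2 b)) := by
    intro z
    rw [hQ]
    rfl
  -- basic facts about elements of A
  have hA01 : ∀ x : A, PowerSeries.coeff 0 x.1 = 0 ∧ PowerSeries.coeff 1 x.1 = 1 := by
    intro x
    obtain ⟨h1, -⟩ := (hAmem x.1).mp x.2
    rw [Ideal.mem_span_singleton] at h1
    have h2 := PowerSeries.X_pow_dvd_iff.mp h1
    constructor
    · have := h2 0 (by omega)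
      rw [map_sub, sub_eq_zero] at this
      rw [this]
      simp
    · have := h2 1 (by omega)
      rw [map_sub, sub_eq_zero] at this
      rw [this]
      simp
  have hAfgl : ∀ x : A, substPS F x.1 =
      subst2 (substPS (MvPowerSeries.X 0 : MvPowerSeries (Fin 2) R) x.1)
        (substPS (MvPowerSeries.X 1 : MvPowerSeries (Fin 2) R) x.1) F := by
    intro x
    exact ((hAmem x.1).mp x.2).2
  -- canonical representatives of Q
  have hQrep : ∀ q : Q, ∃ ab : (ℕ → R) × (ℕ → R),
      q.1 = (Ideal.Quotient.mk I (F1 ab.1), Ideal.Quotient.mk I (F2 ab.2)) := by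
    intro q
    obtain ⟨a, b, h⟩ := (hQmem q.1).mp q.2
    exact ⟨(a, b), h⟩
  set repA : Q → (ℕ → R) := fun q => (Classical.choose (hQrep q)).1 with hrepA
  set repB : Q → (ℕ → R) := fun q => (Classical.choose (hQrep q)).2 with hrepB
  have hrep : ∀ q : Q, q.1 =
      (Ideal.Quotient.mk I (F1 (repA q)), Ideal.Quotient.mk I (F2 (repB q))) :=
    fun q => Classical.choose_spec (hQrep q)
  -- translations to the standard polynomials
  have hf2p' : ∀ b, f2p b = S15.fp p n b := fun b => by rw [hf2p b]; rfl
  have hF2psi : ∀ b, F2 b = S15.psi (S15.fp p n b) := by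
    intro b
    rw [hF2, S15.fp, map_add, S15.psi_X, map_sum]
    congr 1
    refine Finset.sum_congr rfl fun i _ => ?_
    rw [map_mul, map_pow, S15.psi_C, S15.psi_X]
  have hF1psi : ∀ a, F1 a = MvPolynomial.X 0 + S15.psi (S15.ga p n a) := by
    intro a
    rw [hF1, S15.ga, map_sum]
    congr 1
    refine Finset.sum_congr rfl fun i _ => ?_
    rw [map_mul, map_pow, S15.psi_C, S15.psi_X]
  -- the quotient by J detects exactly coefficients below p^n
  have hJiff : ∀ u v : Polynomial R, Ideal.Quotient.mk J u = Ideal.Quotient.mk J v ↔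
      ∀ k < p ^ n, u.coeff k = v.coeff k := by
    intro u v
    rw [hJ]
    exact S15.mkJ_iff
  -- value of β
  have hβval : ∀ q : Q, (β q).1 = Ideal.Quotient.mk J (S15.fp p n (repB q)) := by
    intro q
    rw [hβ (repA q) (repB q) q (hrep q), hf2p']
  -- coefficient extraction from α x = β q
  have hαβ : ∀ (x : A) (q : Q), α x = β q →
      ∀ m < p ^ n, PowerSeries.coeff m x.1 = (S15.fp p n (repB q)).coeff m := by
    intro x q h m hm
    have h1 : (α x).1 = (β q).1 := by rw [h]
    rw [hα x, hβval q] at h1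
    have := (hJiff _ _).mp h1 m hm
    rwa [PowerSeries.coeff_trunc, if_pos hm] at this
  -- injectivity of quotient classes through ψ
  have hpsi_inj : ∀ (w : MvPolynomial (Fin 2) R) (s t : Polynomial R),
      Ideal.Quotient.mk I (w + S15.psi s) = Ideal.Quotient.mk I (w + S15.psi t) →
      ∀ k < p ^ n, s.coeff k = t.coeff k := by
    intro w s t h
    rw [Ideal.Quotient.eq, hI] at h
    have h2 : S15.psi s - S15.psi t ∈
        Ideal.span {(MvPolynomial.X 0 : MvPolynomial (Fin 2) R) ^ 2,
          MvPolynomial.X 1 ^ p ^ n} := by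
      have heq : w + S15.psi s - (w + S15.psi t) = S15.psi s - S15.psi t := by ring
      rwa [heq] at h
    exact S15.coeff_eq_of_mem_span h2
  have hpsi_mk : ∀ (w : MvPolynomial (Fin 2) R) (s t : Polynomial R),
      (∀ k < p ^ n, s.coeff k = t.coeff k) →
      Ideal.Quotient.mk I (w + S15.psi s) = Ideal.Quotient.mk I (w + S15.psi t) := by
    intro w s t h
    rw [Ideal.Quotient.eq, hI]
    have heq : w + S15.psi s - (w + S15.psi t) = S15.psi s - S15.psi t := by ring
    rw [heq]
    exact S15.mem_span_of_coeff h
  have hF1inj : ∀ a a', Ideal.Quotient.mk I (F1 a) = Ideal.Quotient.mk I (F1 a') →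
      ∀ i < n, a i = a' i := by
    intro a a' h i hi
    rw [hF1psi, hF1psi] at h
    have h2 := hpsi_inj _ _ _ h (p ^ i) (Nat.pow_lt_pow_right hp1 hi)
    rwa [S15.ga_coeff_ppow hp1 a hi, S15.ga_coeff_ppow hp1 a' hi] at h2
  -- surjectivity of α onto classes of fp-polynomials : the FGL argument
  have hαsurj : ∀ x : A, ∃ b : ℕ → R,
      (α x).1 = Ideal.Quotient.mk J (S15.fp p n b) := by
    intro x
    obtain ⟨hc0, hc1⟩ := hA01 x
    have hFGL := hAfgl x
    have hGcoeff : ∀ d : Fin 2 →₀ ℕ, S15.deg d < p ^ n →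
        MvPowerSeries.coeff d (F - (MvPowerSeries.X 0 + MvPowerSeries.X 1)) = 0 :=
      S15.span_pow_vanish hFadd
    have hFk : ∀ (k : ℕ) (d : Fin 2 →₀ ℕ), S15.deg d < p ^ n →
        MvPowerSeries.coeff d (F ^ k) =
          MvPowerSeries.coeff d
            ((MvPowerSeries.X 0 + MvPowerSeries.X 1 : MvPowerSeries (Fin 2) R) ^ k) := by
      intro k d hd
      obtain ⟨t, ht⟩ := sub_dvd_pow_sub_pow F
        (MvPowerSeries.X 0 + MvPowerSeries.X 1 : MvPowerSeries (Fin 2) R) k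
      have hmem : F ^ k - (MvPowerSeries.X 0 + MvPowerSeries.X 1) ^ k ∈
          (Ideal.span {(MvPowerSeries.X 0 : MvPowerSeries (Fin 2) R),
            MvPowerSeries.X 1}) ^ p ^ n := by
        rw [ht]
        exact Ideal.mul_mem_right t _ hFadd
      have hvan := S15.span_pow_vanish hmem d hd
      rwa [map_sub, sub_eq_zero] at hvan
    have hXY : ∀ (k : ℕ) (d : Fin 2 →₀ ℕ),
        MvPowerSeries.coeff d
            ((MvPowerSeries.X 0 + MvPowerSeries.X 1 : MvPowerSeries (Fin 2) R) ^ k) =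
          ∑ j ∈ Finset.range (k + 1),
            (if d = Finsupp.single (0 : Fin 2) j + Finsupp.single (1 : Fin 2) (k - j)
              then (k.choose j : R) else 0) := by
      intro k d
      rw [add_pow, map_sum]
      refine Finset.sum_congr rfl fun j hj => ?_
      rw [← map_natCast (MvPowerSeries.C) (k.choose j)]
      have hCr : (MvPowerSeries.C) ((k.choose j : R)) =
          MvPowerSeries.monomial (0 : Fin 2 →₀ ℕ) ((k.choose j : R)) :=
        (congrFun MvPowerSeries.monomial_zero_eq_C ((k.choose j : R))).symm
      rw [MvPowerSeries.X_pow_eq, MvPowerSeries.X_pow_eq, hCr,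
        MvPowerSeries.monomial_mul_monomial, MvPowerSeries.monomial_mul_monomial,
        MvPowerSeries.coeff_monomial]
      simp
    have key : ∀ m, 2 ≤ m → m < p ^ n → (∀ j, m ≠ p ^ j) →
        PowerSeries.coeff m x.1 = 0 := by
      intro m hm2 hmpn hmnp
      obtain ⟨j0, hj00, hj0m, hj0nd⟩ := S15.exists_choose_not_dvd hp m hm2 hmnp
      set d : Fin 2 →₀ ℕ :=
        Finsupp.single (0 : Fin 2) j0 + Finsupp.single (1 : Fin 2) (m - j0) with hd
      have hdeg : S15.deg d = m := by
        rw [hd, S15.deg_add, S15.deg_single, S15.deg_single]; omega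
      have heval : ∀ (j k : ℕ),
          d = Finsupp.single (0 : Fin 2) j + Finsupp.single (1 : Fin 2) k →
          j = j0 ∧ k = m - j0 := by
        intro j k hjk
        have h2 := hd.symm.trans hjk
        have h0 := congrArg (fun e : Fin 2 →₀ ℕ => e 0) h2
        have h1 := congrArg (fun e : Fin 2 →₀ ℕ => e 1) h2
        simp only [Finsupp.add_apply, Finsupp.single_eq_same,
          Finsupp.single_eq_of_ne (by decide : (1 : Fin 2) ≠ 0),
          Finsupp.single_eq_of_ne (by decide : (0 : Fin 2) ≠ 1)] at h0 h1
        omega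
      have hXYd : ∀ k ≤ m, MvPowerSeries.coeff d
            ((MvPowerSeries.X 0 + MvPowerSeries.X 1 : MvPowerSeries (Fin 2) R) ^ k) =
          if k = m then (m.choose j0 : R) else 0 := by
        intro k hkm
        rw [hXY]
        rcases eq_or_ne k m with rfl | hne
        · rw [if_pos rfl, Finset.sum_eq_single j0]
          · rw [if_pos hd]
          · intro j hj hjne
            rw [if_neg (fun hcontra => hjne (heval j (k - j) hcontra).1)]
          · intro habs
            exact absurd (Finset.mem_range.mpr (by omega)) habs
        · rw [if_neg hne]
          refine Finset.sum_eq_zero fun j hj => ?_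
          rw [if_neg]
          intro hcontra
          obtain ⟨hj1, hj2⟩ := heval j (k - j) hcontra
          have hjr := Finset.mem_range.mp hj
          omega
      have hLHS : MvPowerSeries.coeff d (substPS F x.1) =
          PowerSeries.coeff m x.1 * (m.choose j0 : R) := by
        rw [S15.coeff_substPS, hdeg]
        have hterm : ∀ k ∈ Finset.range (m + 1),
            PowerSeries.coeff k x.1 * MvPowerSeries.coeff d (F ^ k) =
            (if k = m then PowerSeries.coeff m x.1 * (m.choose j0 : R) else 0) := by
          intro k hk
          have hkm : k ≤ m := by
            have := Finset.mem_range.mp hk; omega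
          rw [hFk k d (by omega), hXYd k hkm]
          rcases eq_or_ne k m with rfl | hne
          · rw [if_pos rfl, if_pos rfl]
          · rw [if_neg hne, if_neg hne, mul_zero]
        rw [Finset.sum_congr rfl hterm, Finset.sum_ite_eq' (Finset.range (m + 1)) m,
          if_pos (Finset.mem_range.mpr (by omega))]
      have hg00 : MvPowerSeries.coeff 0
          (substPS (MvPowerSeries.X 0 : MvPowerSeries (Fin 2) R) x.1) = 0 := by
        rw [S15.coeff_substPS, S15.deg_zero, Finset.sum_range_one, hc0, zero_mul]
      have hg10 : MvPowerSeries.coeff 0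
          (substPS (MvPowerSeries.X 1 : MvPowerSeries (Fin 2) R) x.1) = 0 := by
        rw [S15.coeff_substPS, S15.deg_zero, Finset.sum_range_one, hc0, zero_mul]
      have hg0d : MvPowerSeries.coeff d
          (substPS (MvPowerSeries.X 0 : MvPowerSeries (Fin 2) R) x.1) = 0 := by
        rw [S15.coeff_substPS]
        refine Finset.sum_eq_zero fun m' _ => ?_
        rw [MvPowerSeries.X_pow_eq, MvPowerSeries.coeff_monomial, if_neg, mul_zero]
        intro hcontra
        have h1 := congrArg (fun e : Fin 2 →₀ ℕ => e 1) (hd.symm.trans hcontra)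
        simp only [Finsupp.add_apply, Finsupp.single_eq_same,
          Finsupp.single_eq_of_ne (by decide : (1 : Fin 2) ≠ 0)] at h1
        omega
      have hg1d : MvPowerSeries.coeff d
          (substPS (MvPowerSeries.X 1 : MvPowerSeries (Fin 2) R) x.1) = 0 := by
        rw [S15.coeff_substPS]
        refine Finset.sum_eq_zero fun m' _ => ?_
        rw [MvPowerSeries.X_pow_eq, MvPowerSeries.coeff_monomial, if_neg, mul_zero]
        intro hcontra
        have h0 := congrArg (fun e : Fin 2 →₀ ℕ => e 0) (hd.symm.trans hcontra)
        simp only [Finsupp.add_apply, Finsupp.single_eq_same,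
          Finsupp.single_eq_of_ne (by decide : (0 : Fin 2) ≠ 1)] at h0
        omega
      have hRHS : MvPowerSeries.coeff d
          (subst2 (substPS (MvPowerSeries.X 0 : MvPowerSeries (Fin 2) R) x.1)
            (substPS (MvPowerSeries.X 1 : MvPowerSeries (Fin 2) R) x.1) F) = 0 := by
        rw [S15.coeff_subst2, hdeg]
        have hterm : ∀ i j : ℕ,
            MvPowerSeries.coeff
                (Finsupp.single (0 : Fin 2) i + Finsupp.single (1 : Fin 2) j) F *
              MvPowerSeries.coeff d
                ((substPS (MvPowerSeries.X 0 : MvPowerSeries (Fin 2) R) x.1) ^ i *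
                  (substPS (MvPowerSeries.X 1 : MvPowerSeries (Fin 2) R) x.1) ^ j) =
            (if Finsupp.single (0 : Fin 2) i + Finsupp.single (1 : Fin 2) j =
                Finsupp.single (0 : Fin 2) 1 then (1 : R) else 0) *
              MvPowerSeries.coeff d
                ((substPS (MvPowerSeries.X 0 : MvPowerSeries (Fin 2) R) x.1) ^ i *
                  (substPS (MvPowerSeries.X 1 : MvPowerSeries (Fin 2) R) x.1) ^ j) +
            ((if Finsupp.single (0 : Fin 2) i + Finsupp.single (1 : Fin 2) j =
                Finsupp.single (1 : Fin 2) 1 then (1 : R) else 0) *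
              MvPowerSeries.coeff d
                ((substPS (MvPowerSeries.X 0 : MvPowerSeries (Fin 2) R) x.1) ^ i *
                  (substPS (MvPowerSeries.X 1 : MvPowerSeries (Fin 2) R) x.1) ^ j) +
            MvPowerSeries.coeff
                (Finsupp.single (0 : Fin 2) i + Finsupp.single (1 : Fin 2) j)
                (F - (MvPowerSeries.X 0 + MvPowerSeries.X 1)) *
              MvPowerSeries.coeff d
                ((substPS (MvPowerSeries.X 0 : MvPowerSeries (Fin 2) R) x.1) ^ i *
                  (substPS (MvPowerSeries.X 1 : MvPowerSeries (Fin 2) R) x.1) ^ j)) := by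
          intro i j
          rw [← MvPowerSeries.coeff_X (R := R)
              (Finsupp.single (0 : Fin 2) i + Finsupp.single (1 : Fin 2) j) 0,
            ← MvPowerSeries.coeff_X (R := R)
              (Finsupp.single (0 : Fin 2) i + Finsupp.single (1 : Fin 2) j) 1]
          rw [← add_mul, ← add_mul, ← map_add, ← map_add]
          congr 2
          ring
        rw [Finset.sum_congr rfl fun i _ => Finset.sum_congr rfl fun j _ => hterm i j]
        rw [Finset.sum_congr rfl fun i _ => Finset.sum_add_distrib,
          Finset.sum_add_distrib]
        rw [Finset.sum_congr rfl fun i _ => Finset.sum_add_distrib,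
          Finset.sum_add_distrib]
        have hcond1 : ∀ i j : ℕ,
            (Finsupp.single (0 : Fin 2) i + Finsupp.single (1 : Fin 2) j =
              Finsupp.single (0 : Fin 2) 1) ↔ (i = 1 ∧ j = 0) := by
          intro i j
          constructor
          · intro h
            have h0 := congrArg (fun e : Fin 2 →₀ ℕ => e 0) h
            have h1 := congrArg (fun e : Fin 2 →₀ ℕ => e 1) h
            simp only [Finsupp.add_apply, Finsupp.single_eq_same,
              Finsupp.single_eq_of_ne (by decide : (1 : Fin 2) ≠ 0),
              Finsupp.single_eq_of_ne (by decide : (0 : Fin 2) ≠ 1)] at h0 h1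
            omega
          · rintro ⟨rfl, rfl⟩
            rw [Finsupp.single_zero, add_zero]
        have hcond2 : ∀ i j : ℕ,
            (Finsupp.single (0 : Fin 2) i + Finsupp.single (1 : Fin 2) j =
              Finsupp.single (1 : Fin 2) 1) ↔ (i = 0 ∧ j = 1) := by
          intro i j
          constructor
          · intro h
            have h0 := congrArg (fun e : Fin 2 →₀ ℕ => e 0) h
            have h1 := congrArg (fun e : Fin 2 →₀ ℕ => e 1) h
            simp only [Finsupp.add_apply, Finsupp.single_eq_same,
              Finsupp.single_eq_of_ne (by decide : (1 : Fin 2) ≠ 0),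
              Finsupp.single_eq_of_ne (by decide : (0 : Fin 2) ≠ 1)] at h0 h1
            omega
          · rintro ⟨rfl, rfl⟩
            rw [Finsupp.single_zero, zero_add]
        have e1 := S15.dsum_ite (M := m + 1)
          (fun i j => MvPowerSeries.coeff d
            ((substPS (MvPowerSeries.X 0 : MvPowerSeries (Fin 2) R) x.1) ^ i *
              (substPS (MvPowerSeries.X 1 : MvPowerSeries (Fin 2) R) x.1) ^ j))
          (show 1 < m + 1 by omega) (show 0 < m + 1 by omega) _ hcond1
        have e2 := S15.dsum_ite (M := m + 1)
          (fun i j => MvPowerSeries.coeff d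
            ((substPS (MvPowerSeries.X 0 : MvPowerSeries (Fin 2) R) x.1) ^ i *
              (substPS (MvPowerSeries.X 1 : MvPowerSeries (Fin 2) R) x.1) ^ j))
          (show 0 < m + 1 by omega) (show 1 < m + 1 by omega) _ hcond2
        rw [e1, e2]
        have hSC : ∑ i ∈ Finset.range (m + 1), ∑ j ∈ Finset.range (m + 1),
            MvPowerSeries.coeff
                (Finsupp.single (0 : Fin 2) i + Finsupp.single (1 : Fin 2) j)
                (F - (MvPowerSeries.X 0 + MvPowerSeries.X 1)) *
              MvPowerSeries.coeff d
                ((substPS (MvPowerSeries.X 0 : MvPowerSeries (Fin 2) R) x.1) ^ i *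
                  (substPS (MvPowerSeries.X 1 : MvPowerSeries (Fin 2) R) x.1) ^ j) = 0 := by
          refine Finset.sum_eq_zero fun i _ => Finset.sum_eq_zero fun j _ => ?_
          by_cases hij : i + j < p ^ n
          · rw [hGcoeff _ (by rw [S15.deg_add, S15.deg_single, S15.deg_single]; omega),
              zero_mul]
          · have hvan : MvPowerSeries.coeff d
                ((substPS (MvPowerSeries.X 0 : MvPowerSeries (Fin 2) R) x.1) ^ i *
                  (substPS (MvPowerSeries.X 1 : MvPowerSeries (Fin 2) R) x.1) ^ j) = 0 :=
              S15.coeff_mul_vanish (S15.coeff_pow_vanish hg00 i)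
                (S15.coeff_pow_vanish hg10 j) d (by omega)
            rw [hvan, mul_zero]
        rw [hSC]
        simp only [pow_one, pow_zero, mul_one, one_mul]
        rw [hg0d, hg1d]
        ring
      have hzero : PowerSeries.coeff m x.1 * (m.choose j0 : R) = 0 := by
        rw [← hLHS, hFGL, hRHS]
      exact S15.eq_zero_of_mul_choose hp hj0nd hpR hzero
    set w : Polynomial R := PowerSeries.trunc (p ^ n) x.1 with hw
    have hPPw : S15.PP p w := by
      intro k hk
      rw [hw, PowerSeries.coeff_trunc]
      split_ifs with hkpn
      · rcases Nat.lt_or_ge k 2 with hk2 | hk2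
        · interval_cases k
          · exact hc0
          · exact absurd (pow_zero p).symm (hk 0)
        · exact key k hk2 hkpn hk
      · rfl
    have hw1 : w.coeff 1 = 1 := by
      rw [hw, PowerSeries.coeff_trunc, if_pos (by omega), hc1]
    refine ⟨fun j => w.coeff (p ^ j), ?_⟩
    rw [hα x]
    exact (hJiff _ _).mpr fun k hk => S15.canon_fp hp hPPw hw1 hk
  -- more helpers
  have hfp0 : ∀ b : ℕ → R, (S15.fp p n b).coeff 0 = 0 := S15.fp_coeff_zero hp.pos
  have hpsi_inj0 : ∀ s t : Polynomial R,
      Ideal.Quotient.mk I (S15.psi s) = Ideal.Quotient.mk I (S15.psi t) →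
      ∀ k < p ^ n, s.coeff k = t.coeff k := by
    intro s t h
    apply hpsi_inj 0 s t
    simpa using h
  have hpsi_mk0 : ∀ s t : Polynomial R, (∀ k < p ^ n, s.coeff k = t.coeff k) →
      Ideal.Quotient.mk I (S15.psi s) = Ideal.Quotient.mk I (S15.psi t) := by
    intro s t h
    have := hpsi_mk 0 s t h
    simpa using this
  have hpsi_comp : ∀ bb dd : ℕ → R, S15.psi ((S15.fp p n dd).comp (S15.fp p n bb)) =
      F2 bb + ∑ i ∈ Finset.Ico 1 n, MvPolynomial.C (dd i) * (F2 bb) ^ p ^ i := by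
    intro bb dd
    rw [S15.fp_comp, map_add, map_sum, ← hF2psi]
    congr 1
    refine Finset.sum_congr rfl fun i _ => ?_
    rw [map_mul, map_pow, S15.psi_C, ← hF2psi]
  have hcomp_w : ∀ b d : ℕ → R, S15.PP p ((S15.fp p n d).comp (S15.fp p n b)) ∧
      ((S15.fp p n d).comp (S15.fp p n b)).coeff 1 = 1 := by
    intro b d
    rw [S15.fp_comp]
    constructor
    · exact S15.PP_add (S15.PP_fp b)
        (S15.PP_sum fun i _ => S15.PP_Cmul _ (S15.PP_fp_pow hp hpR b i))
    · rw [Polynomial.coeff_add, S15.fp_coeff_one hp1, Polynomial.finset_sum_coeff,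
        Finset.sum_eq_zero, add_zero]
      intro i hi
      obtain ⟨hi1, -⟩ := Finset.mem_Ico.mp hi
      rw [Polynomial.coeff_C_mul, S15.fp_pow_coeff_one hp hpR b hi1, mul_zero]
  have hXX : ∀ k : ℕ, PowerSeries.coeff k (PowerSeries.X : PowerSeries R) =
      (Polynomial.X : Polynomial R).coeff k := by
    intro k
    rw [PowerSeries.coeff_X, Polynomial.coeff_X]
    split_ifs with h1 h2 <;> first | rfl | omega
  -- closure under multiplication
  have hmulC : ∀ x y : A × Q, α x.1 = β x.2 → α y.1 = β y.2 →
      α (mulA x.1 y.1) = β (mulQ x.2 y.2) := by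
    intro x y hx hy
    set b : ℕ → R := repB x.2 with hbd
    set dd : ℕ → R := repB y.2 with hddd
    set w : Polynomial R := (S15.fp p n dd).comp (S15.fp p n b) with hwdef
    obtain ⟨hwPP, hw1⟩ := hcomp_w b dd
    set b2 : ℕ → R := fun j => w.coeff (p ^ j) with hb2
    have hwcanon : ∀ k < p ^ n, w.coeff k = (S15.fp p n b2).coeff k :=
      fun k hk => S15.canon_fp hp hwPP hw1 hk
    set v : Polynomial R := S15.ga p n (repA x.2) +
      ∑ i ∈ Finset.range n, Polynomial.C (repA y.2 i) * (S15.fp p n b) ^ p ^ i with hvdef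
    have hvPP : S15.PP p v := S15.PP_add (S15.PP_ga _)
      (S15.PP_sum fun i _ => S15.PP_Cmul _ (S15.PP_fp_pow hp hpR b i))
    set a2 : ℕ → R := fun j => v.coeff (p ^ j) with ha2
    have hvcanon : ∀ k < p ^ n, v.coeff k = (S15.ga p n a2).coeff k :=
      fun k hk => S15.canon_ga hp hvPP hk
    have hprod := hmulQ (repA x.2) b (repA y.2) dd x.2 y.2 (hrep x.2) (hrep y.2)
    have h1st : F1 (repA x.2) +
        ∑ i ∈ Finset.range n, MvPolynomial.C (repA y.2 i) * (F2 b) ^ p ^ i =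
        MvPolynomial.X 0 + S15.psi v := by
      rw [hvdef, map_add, map_sum, hF1psi, add_assoc]
      congr 2
      refine Finset.sum_congr rfl fun i _ => ?_
      rw [map_mul, map_pow, S15.psi_C, ← hF2psi]
    have e1 : Ideal.Quotient.mk I (F1 (repA x.2) +
        ∑ i ∈ Finset.range n, MvPolynomial.C (repA y.2 i) * (F2 b) ^ p ^ i) =
        Ideal.Quotient.mk I (F1 a2) := by
      rw [h1st, hF1psi a2]
      exact hpsi_mk _ _ _ hvcanon
    have e2 : Ideal.Quotient.mk I (F2 b +
        ∑ i ∈ Finset.Ico 1 n, MvPolynomial.C (dd i) * (F2 b) ^ p ^ i) =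
        Ideal.Quotient.mk I (F2 b2) := by
      rw [← hpsi_comp b dd, hF2psi b2]
      exact hpsi_mk0 _ _ hwcanon
    have hQside : (mulQ x.2 y.2).1 =
        (Ideal.Quotient.mk I (F1 a2), Ideal.Quotient.mk I (F2 b2)) := by
      rw [hprod, e1, e2]
    have hβside : (β (mulQ x.2 y.2)).1 = Ideal.Quotient.mk J (f2p b2) :=
      hβ a2 b2 _ hQside
    apply Subtype.ext
    rw [hβside, hf2p', hα]
    apply (hJiff _ _).mpr
    intro k hk
    rw [PowerSeries.coeff_trunc, if_pos hk, hmulA]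
    have hstep1 : PowerSeries.coeff k (substPS (x.1.1 : PowerSeries R) y.1.1) =
        PowerSeries.coeff k
          (substPS ((S15.fp p n b : Polynomial R) : PowerSeries R)
            ((S15.fp p n dd : Polynomial R) : PowerSeries R)) :=
      S15.coeff_substPS_congr
        (fun m' hm' => by rw [Polynomial.coeff_coe]; exact hαβ x.1 x.2 hx m' hm')
        (fun m' hm' => by rw [Polynomial.coeff_coe]; exact hαβ y.1 y.2 hy m' hm')
        hk
    rw [hstep1, S15.coeff_substPS_poly _ _ (hfp0 b) k]
    exact hwcanon k hk
  -- closure under inverses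
  have hinvC : ∀ x : A × Q, α x.1 = β x.2 → α (invA x.1) = β (invQ x.2) := by
    intro x hx
    set b : ℕ → R := repB x.2 with hbd
    set b' : ℕ → R := repB (invQ x.2) with hb'd
    have hq1 := hmulQ (repA (invQ x.2)) b' (repA x.2) b (invQ x.2) x.2
      (hrep _) (hrep _)
    rw [(hinvQ x.2).1, hOneQ] at hq1
    have hq1snd := congrArg Prod.snd hq1
    have hq2 := hmulQ (repA x.2) b (repA (invQ x.2)) b' x.2 (invQ x.2)
      (hrep _) (hrep _)
    rw [(hinvQ x.2).2, hOneQ] at hq2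
    have hq2snd := congrArg Prod.snd hq2
    have hcompba : ∀ k < p ^ n,
        ((S15.fp p n b).comp (S15.fp p n b')).coeff k =
          (Polynomial.X : Polynomial R).coeff k := by
      apply hpsi_inj0
      rw [hpsi_comp b' b, S15.psi_X]
      exact hq1snd.symm
    have hcompab : ∀ k < p ^ n,
        ((S15.fp p n b').comp (S15.fp p n b)).coeff k =
          (Polynomial.X : Polynomial R).coeff k := by
      apply hpsi_inj0
      rw [hpsi_comp b b', S15.psi_X]
      exact hq2snd.symm
    set U : Polynomial R := PowerSeries.trunc (p ^ n) ((invA x.1).1 : PowerSeries R)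
      with hUdef
    have hAeq : substPS (x.1.1 : PowerSeries R) ((invA x.1).1 : PowerSeries R) =
        PowerSeries.X := by
      have h3 := congrArg Subtype.val (hinvA x.1).2
      rw [hmulA, hOneA] at h3
      exact h3
    have hstar3 : ∀ k < p ^ n, (U.comp (S15.fp p n b)).coeff k =
        (Polynomial.X : Polynomial R).coeff k := by
      intro k hk
      have hstep : PowerSeries.coeff k
            (substPS (x.1.1 : PowerSeries R) ((invA x.1).1 : PowerSeries R)) =
          PowerSeries.coeff k
            (substPS ((S15.fp p n b : Polynomial R) : PowerSeries R)
              ((U : Polynomial R) : PowerSeries R)) :=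
        S15.coeff_substPS_congr
          (fun m hm => by rw [Polynomial.coeff_coe]; exact hαβ x.1 x.2 hx m hm)
          (fun m hm => by
            rw [Polynomial.coeff_coe, hUdef, PowerSeries.coeff_trunc, if_pos hm])
          hk
      rw [← S15.coeff_substPS_poly _ _ (hfp0 b) k, ← hstep, hAeq, hXX]
    have hU0 : U.coeff 0 = 0 := by
      rw [hUdef, PowerSeries.coeff_trunc, if_pos (by omega)]
      exact (hA01 (invA x.1)).1
    have hcomp0 : ((S15.fp p n b).comp (S15.fp p n b')).coeff 0 = 0 := by
      rw [hcompba 0 (by omega)]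
      simp
    have hfinal : ∀ k < p ^ n, U.coeff k = (S15.fp p n b').coeff k := by
      intro k hk
      calc U.coeff k = (U.comp Polynomial.X).coeff k := by rw [Polynomial.comp_X]
        _ = (U.comp ((S15.fp p n b).comp (S15.fp p n b'))).coeff k :=
            S15.comp_congr (by simp) hcomp0
              (fun m hm => (hcompba m hm).symm) (fun _ _ => rfl) hk
        _ = ((U.comp (S15.fp p n b)).comp (S15.fp p n b')).coeff k := by
            rw [← Polynomial.comp_assoc]
        _ = (Polynomial.X.comp (S15.fp p n b')).coeff k :=
            S15.comp_congr (hfp0 b') (hfp0 b') (fun _ _ => rfl)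
              (fun m hm => hstar3 m hm) hk
        _ = (S15.fp p n b').coeff k := by rw [Polynomial.X_comp]
    apply Subtype.ext
    rw [hα (invA x.1), hβval (invQ x.2)]
    apply (hJiff _ _).mpr
    intro k hk
    rw [PowerSeries.coeff_trunc]
    rw [if_pos hk]
    have := hfinal k hk
    rw [hUdef, PowerSeries.coeff_trunc, if_pos hk] at this
    exact this
  have hCmem : ∀ z : A × Q, z ∈ Cset ↔ α z.1 = β z.2 := by
    intro z
    rw [hC]
    rfl
  -- kernel elements have trivial second representative
  have hkerF2 : ∀ c : {x : A × Q // x ∈ Cset}, c.1.1 = oneA →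
      F2 (repB c.1.2) = MvPolynomial.X 1 := by
    intro c hone
    have hx : α c.1.1 = β c.1.2 := (hCmem c.1).mp c.2
    rw [hone] at hx
    have h1 : (α oneA).1 = (β c.1.2).1 := by rw [hx]
    rw [hα oneA, hOneA, hβval] at h1
    have hco := (hJiff _ _).mp h1
    have hbz : ∀ i, 1 ≤ i → i < n → repB c.1.2 i = 0 := by
      intro i hi1 hi2
      have hlt : p ^ i < p ^ n := Nat.pow_lt_pow_right hp1 hi2
      have := hco (p ^ i) hlt
      rw [S15.fp_coeff_ppow hp1 _ hi1 hi2, PowerSeries.coeff_trunc, if_pos hlt,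
        PowerSeries.coeff_X, if_neg (S15.ppow_ne_one hp1 hi1)] at this
      exact this.symm
    rw [hF2, Finset.sum_eq_zero, add_zero]
    intro i hi
    obtain ⟨hi1, hi2⟩ := Finset.mem_Ico.mp hi
    rw [hbz i hi1 hi2, map_zero, zero_mul]
  -- assemble everything
  refine ⟨⟨?_, ?_, ?_⟩, ⟨?_, ?_⟩, ?_⟩
  · -- identity in Cset
    rw [hC]
    show α oneA = β oneQ
    have honeQrep : oneQ.1 = (Ideal.Quotient.mk I (F1 (fun _ => 0)),
        Ideal.Quotient.mk I (F2 (fun _ => 0))) := by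
      rw [hOneQ, hF1, hF2]
      simp
    apply Subtype.ext
    rw [hα oneA, hβ (fun _ => 0) (fun _ => 0) oneQ honeQrep, hOneA, hf2p']
    apply (hJiff _ _).mpr
    intro k hk
    rw [PowerSeries.coeff_trunc, if_pos hk]
    have hfpz : S15.fp p n (fun _ => (0 : R)) = Polynomial.X := by
      rw [S15.fp]; simp
    rw [hfpz, hXX]
  · -- closure under products
    intro x hx y hy
    rw [hC] at hx hy ⊢
    exact hmulC x y hx hy
  · -- closure under inverses
    intro x hx
    rw [hC] at hx ⊢
    exact hinvC x hx
  · -- surjectivity of the first projection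
    intro f
    obtain ⟨b, hb⟩ := hαsurj f
    have hmemQ : ((Ideal.Quotient.mk I (F1 (fun _ => 0)),
        Ideal.Quotient.mk I (F2 b))) ∈ Q := (hQmem _).mpr ⟨fun _ => 0, b, rfl⟩
    refine ⟨(f, ⟨_, hmemQ⟩), ?_, rfl⟩
    rw [hC]
    show α f = β _
    apply Subtype.ext
    rw [hb, hβ (fun _ => 0) b _ rfl, hf2p']
  · -- group homomorphism (formal)
    intro c c' d h
    rw [h]
  · -- the kernel is R^n
    refine ⟨fun c => fun i => repA c.1.1.2 i, ⟨?_, ?_⟩, ?_⟩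
    · -- injective
      intro c c' h
      have hrepAeq : ∀ i < n, repA c.1.1.2 i = repA c'.1.1.2 i := by
        intro i hi
        exact congrFun h ⟨i, hi⟩
      have hq : c.1.1.2 = c'.1.1.2 := by
        apply Subtype.ext
        rw [hrep c.1.1.2, hrep c'.1.1.2]
        have hF1eq : F1 (repA c.1.1.2) = F1 (repA c'.1.1.2) := by
          rw [hF1, hF1]
          congr 1
          refine Finset.sum_congr rfl fun i hi => ?_
          rw [hrepAeq i (Finset.mem_range.mp hi)]
        have hF2eq : F2 (repB c.1.1.2) = F2 (repB c'.1.1.2) := by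
          rw [hkerF2 c c.2, hkerF2 c' c'.2]
        rw [hF1eq, hF2eq]
      have hpair : c.1.1 = c'.1.1 := Prod.ext (by rw [c.2, c'.2]) hq
      exact Subtype.ext (Subtype.ext hpair)
    · -- surjective
      intro v
      set a : ℕ → R := fun i => if h : i < n then v ⟨i, h⟩ else 0 with ha
      have hmemQ : ((Ideal.Quotient.mk I (F1 a),
          Ideal.Quotient.mk I (F2 (fun _ => 0)))) ∈ Q :=
        (hQmem _).mpr ⟨a, fun _ => 0, rfl⟩
      have hmemC : ((oneA, (⟨_, hmemQ⟩ : Q)) : A × Q) ∈ Cset := by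
        rw [hC]
        show α oneA = β _
        apply Subtype.ext
        rw [hα oneA, hOneA, hβ a (fun _ => 0) _ rfl, hf2p']
        apply (hJiff _ _).mpr
        intro k hk
        rw [PowerSeries.coeff_trunc, if_pos hk]
        have hfpz : S15.fp p n (fun _ => (0 : R)) = Polynomial.X := by
          rw [S15.fp]; simp
        rw [hfpz, hXX]
      refine ⟨⟨⟨(oneA, ⟨_, hmemQ⟩), hmemC⟩, rfl⟩, ?_⟩
      funext i
      have hkey : Ideal.Quotient.mk I (F1 (repA (⟨_, hmemQ⟩ : Q))) =
          Ideal.Quotient.mk I (F1 a) :=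
        (congrArg Prod.fst (hrep (⟨_, hmemQ⟩ : Q))).symm
      have := hF1inj _ _ hkey i i.2
      show repA (⟨_, hmemQ⟩ : Q) i = v i
      rw [this, ha]
      simp
    · -- additive
      intro c c' d hd
      have hq := congrArg Prod.snd hd
      have hmul := hmulQ (repA c.1.1.2) (repB c.1.1.2) (repA c'.1.1.2)
        (repB c'.1.1.2) c.1.1.2 c'.1.1.2 (hrep _) (hrep _)
      rw [hkerF2 c c.2] at hmul
      have h1st : F1 (repA c.1.1.2) + ∑ i ∈ Finset.range n,
          MvPolynomial.C (repA c'.1.1.2 i) *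
            (MvPolynomial.X 1 : MvPolynomial (Fin 2) R) ^ p ^ i =
          F1 (fun i => repA c.1.1.2 i + repA c'.1.1.2 i) := by
        rw [hF1, hF1, add_assoc, ← Finset.sum_add_distrib]
        congr 1
        refine Finset.sum_congr rfl fun i _ => ?_
        rw [map_add, add_mul]
      rw [h1st] at hmul
      have hkey : Ideal.Quotient.mk I (F1 (repA d.1.1.2)) =
          Ideal.Quotient.mk I (F1 (fun i => repA c.1.1.2 i + repA c'.1.1.2 i)) := by
        have h2 : d.1.1.2.1.1 =
            Ideal.Quotient.mk I (F1 (fun i => repA c.1.1.2 i + repA c'.1.1.2 i)) := by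
          rw [hq]
          exact congrArg Prod.fst hmul
        exact (congrArg Prod.fst (hrep d.1.1.2)).symm.trans h2
      have hvals := hF1inj _ _ hkey
      funext i
      show repA d.1.1.2 i = repA c.1.1.2 i + repA c'.1.1.2 i
      exact hvals i i.2
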